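/- Among all rooted trees of order n, the number of subtrees containing the root is at least n, with equality if and only if the tree is a path rooted at one of its end vertices. -/

import Mathlib

open SimpleGraph Finset

/-- Eccentricity of a vertex: max distance to any vertex. -/
noncomputable def ecc {V : Type*} [Fintype V] (G : SimpleGraph V) (v : V) : ℕ :=
  Finset.univ.sup (fun u => G.dist v u)

/-- The center: vertices of minimum eccentricity. -/
noncomputable def center {V : Type*} [Fintype V] (G : SimpleGraph V) : Set V :=
  {v | ∀ u, ecc G v ≤ ecc G u}

/-- Total distance of a vertex. -/
noncomputable def totalDist {V : Type*} [Fintype V] (G : SimpleGraph V) (v : V) : ℕ :=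
  ∑ u, G.dist v u

/-- The centroid: vertices of minimum total distance. -/
noncomputable def centroid {V : Type*} [Fintype V] (G : SimpleGraph V) : Set V :=
  {v | ∀ u, totalDist G v ≤ totalDist G u}

/-- Number of subtrees (connected induced subgraphs on nonempty vertex sets) containing `v`. -/
noncomputable def subtreeCount {V : Type*} [Fintype V] (G : SimpleGraph V) (v : V) : ℕ :=
  Nat.card {A : Finset V // v ∈ A ∧ (G.induce (A : Set V)).Connected}

/-- The subtree core: vertices maximizing the number of containing subtrees. -/
noncomputable def core {V : Type*} [Fintype V] (G : SimpleGraph V) : Set V :=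
  {v | ∀ u, subtreeCount G u ≤ subtreeCount G v}

/-- Distance between two sets of vertices. -/
noncomputable def setDist {V : Type*} (G : SimpleGraph V) (S S' : Set V) : ℕ :=
  sInf {n | ∃ u ∈ S, ∃ v ∈ S', G.dist u v = n}

section Aux

variable {V : Type*} [DecidableEq V] {G : SimpleGraph V}

/-- In a tree, every path has length equal to the distance between its endpoints. -/
lemma aux_length_eq_dist (hT : G.IsTree) {a b : V} (p : G.Walk a b) (hp : p.IsPath) :
    p.length = G.dist a b := by
  refine le_antisymm ?_ (SimpleGraph.dist_le p)
  obtain ⟨q, hq⟩ := (hT.isConnected.preconnected a b).exists_walk_length_eq_dist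
  have hqb : q.bypass.IsPath := q.bypass_isPath
  have := (hT.existsUnique_path a b).unique hp hqb
  rw [this, ← hq]
  exact q.length_bypass_le

/-- Distance additivity along a path in a tree. -/
lemma aux_dist_add (hT : G.IsTree) {a b w : V} (p : G.Walk a b) (hp : p.IsPath)
    (hw : w ∈ p.support) : G.dist a w + G.dist w b = G.dist a b := by
  have h1 := aux_length_eq_dist hT (p.takeUntil w hw) (hp.takeUntil hw)
  have h2 := aux_length_eq_dist hT (p.dropUntil w hw) (hp.dropUntil hw)
  have h3 := aux_length_eq_dist hT p hp
  have h4 : (p.takeUntil w hw).length + (p.dropUntil w hw).length = p.length := by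
    rw [← SimpleGraph.Walk.length_append, p.take_spec hw]
  omega

/-- On a path in a tree, vertices are determined by their distance from the start. -/
lemma aux_eq_of_dist_eq (hT : G.IsTree) {r u v w : V} (q : G.Walk r u) (hq : q.IsPath)
    (hv : v ∈ q.support) (hw : w ∈ q.support) (hd : G.dist r v = G.dist r w) : v = w := by
  have hre : ∀ x y : V, G.Reachable x y := fun x y => hT.isConnected.preconnected x y
  rw [← q.take_spec hv, SimpleGraph.Walk.mem_support_append_iff] at hw
  cases hw with
  | inl hw =>
    have h1 := aux_dist_add hT _ (hq.takeUntil hv) hw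
    have h0 : G.dist r v = G.dist r v := rfl
    -- dist r w + dist w v = dist r v, and dist r w = dist r v so dist w v = 0
    have : G.dist w v = 0 := by omega
    exact ((hre w v).dist_eq_zero_iff.mp this).symm
  | inr hw =>
    have h1 := aux_dist_add hT _ (hq.dropUntil hv) hw
    have h2 := aux_dist_add hT _ hq hv
    have h3 := aux_dist_add hT _ hq (by rw [← q.take_spec hv, SimpleGraph.Walk.mem_support_append_iff]; exact Or.inr hw : w ∈ q.support)
    -- dist v w + dist w u = dist v u ; dist r v + dist v u = dist r u ; dist r w + dist w u = dist r u
    have : G.dist v w = 0 := by omega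
    exact (hre v w).dist_eq_zero_iff.mp this

/-- Adjacent vertices on a path differ in distance-from-start by exactly one. -/
lemma aux_adj_pos (hT : G.IsTree) {r u v w : V} (q : G.Walk r u) (hq : q.IsPath)
    (hv : v ∈ q.support) (hw : w ∈ q.support) (h : G.Adj v w) :
    G.dist r w = G.dist r v + 1 ∨ G.dist r v = G.dist r w + 1 := by
  have h1 : G.dist v w = 1 := by
    refine le_antisymm (SimpleGraph.dist_le (h.toWalk)) ?_
    have : v ≠ w := h.ne
    have := SimpleGraph.Connected.pos_dist_of_ne hT.isConnected this
    omega
  have ht1 : G.dist r w ≤ G.dist r v + 1 := by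
    have := hT.isConnected.dist_triangle (u := r) (v := v) (w := w)
    omega
  have ht2 : G.dist r v ≤ G.dist r w + 1 := by
    have := hT.isConnected.dist_triangle (u := r) (v := w) (w := v)
    have : G.dist w v = 1 := by rwa [SimpleGraph.dist_comm] at h1
    omega
  have hne : G.dist r v ≠ G.dist r w := fun hd => h.ne (aux_eq_of_dist_eq hT q hq hv hw hd)
  omega

/-- Convexity: a connected induced subgraph of a tree contains the path between
any two of its vertices. -/
lemma aux_convex (hT : G.IsTree) {A : Set V} (hA : (G.induce A).Connected)
    {x y : V} (hx : x ∈ A) (hy : y ∈ A) (p : G.Walk x y) (hp : p.IsPath) :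
    ∀ z ∈ p.support, z ∈ A := by
  obtain ⟨W⟩ := hA.preconnected ⟨x, hx⟩ ⟨y, hy⟩
  let f : G.induce A →g G := ⟨Subtype.val, fun {a b} h => h⟩
  let W' : G.Walk x y := W.map f
  have hsub : ∀ z ∈ W'.support, z ∈ A := by
    intro z hz
    rw [SimpleGraph.Walk.support_map] at hz
    obtain ⟨⟨z', hz'⟩, _, rfl⟩ := List.mem_map.mp hz
    exact hz'
  have hb : W'.bypass.IsPath := W'.bypass_isPath
  have := (hT.existsUnique_path x y).unique hp hb
  intro z hz
  rw [this] at hz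
  exact hsub z (W'.support_bypass_subset hz)

lemma aux_diff_subsingleton {s : Set V} (hfin : s.Finite) (h2 : s.ncard ≤ 2) {w : V}
    (hw : w ∈ s) : (s \ {w}).Subsingleton := by
  have h1 := Set.encard_diff_singleton_add_one hw
  have h3 : s.encard ≤ 2 := by
    rw [← hfin.cast_ncard_eq]
    exact_mod_cast Nat.cast_le.mpr h2
  have h4 : (s \ {w}).encard + 1 ≤ 2 := by rw [h1]; exact h3
  have h5 : (s \ {w}).encard ≤ 1 := by
    have h6 : ((s \ {w}).encard + 1 ≤ 1 + 1) := by rwa [one_add_one_eq_two]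
    exact (ENat.add_le_add_iff_right (by simp)).mp h6
  intro a ha b hb
  exact Set.encard_le_one_iff.mp h5 a b ha hb

/-- Key branching lemma: in a tree where all degrees are ≤ 2 and at most one neighbor
of the common start is available, one of two paths from the same start contains the
other's endpoint. -/
lemma aux_branch [Fintype V] (hT : G.IsTree) (hdeg : ∀ v, (G.neighborSet v).ncard ≤ 2)
    {w x : V} (p : G.Walk w x) :
    ∀ {u : V} (q : G.Walk w u) (S : Set V), p.IsPath → q.IsPath →
      (G.neighborSet w \ S).Subsingleton →
      (∀ s ∈ S, s ∉ p.support) → (∀ s ∈ S, s ∉ q.support) →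
      x ∈ q.support ∨ u ∈ p.support := by
  induction p with
  | nil => exact fun q S _ _ _ _ _ => Or.inl q.start_mem_support
  | @cons w y x h p ih =>
    intro u q S hp hq hss hSp hSq
    cases q with
    | nil => exact Or.inr ((SimpleGraph.Walk.cons h p).start_mem_support)
    | @cons _ z _ h' q' =>
      have hy : y ∈ G.neighborSet w \ S :=
        ⟨h, fun hyS => hSp y hyS (by simp [SimpleGraph.Walk.support_cons])⟩
      have hz : z ∈ G.neighborSet w \ S :=
        ⟨h', fun hzS => hSq z hzS (by simp [SimpleGraph.Walk.support_cons])⟩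
      have hyz : y = z := hss hy hz
      subst hyz
      rw [SimpleGraph.Walk.cons_isPath_iff] at hp hq
      have hss' : (G.neighborSet y \ {w}).Subsingleton :=
        aux_diff_subsingleton (Set.toFinite _) (hdeg y) h.symm
      have hres := ih q' {w} hp.1 hq.1 hss'
        (by rintro s rfl; exact hp.2) (by rintro s rfl; exact hq.2)
      rcases hres with hx | hu
      · exact Or.inl (by simp [SimpleGraph.Walk.support_cons, hx])
      · exact Or.inr (by simp [SimpleGraph.Walk.support_cons, hu])

lemma aux_subsingleton_of_ncard_le_one {s : Set V} (hfin : s.Finite) (h1 : s.ncard ≤ 1) :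
    s.Subsingleton := by
  have h3 : s.encard ≤ 1 := by
    rw [← hfin.cast_ncard_eq]
    exact_mod_cast Nat.cast_le.mpr h1
  intro a ha b hb
  exact Set.encard_le_one_iff.mp h3 a b ha hb

lemma aux_dist_adj (hT : G.IsTree) {x y : V} (h : G.Adj x y) : G.dist x y = 1 := by
  refine le_antisymm (SimpleGraph.dist_le h.toWalk) ?_
  have := SimpleGraph.Connected.pos_dist_of_ne hT.isConnected h.ne
  omega

/-- The unique path between two vertices of a tree. -/
noncomputable def tpath (hT : G.IsTree) (a b : V) : G.Walk a b :=
  (hT.existsUnique_path a b).exists.choose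

lemma tpath_isPath (hT : G.IsTree) (a b : V) : (tpath hT a b).IsPath :=
  (hT.existsUnique_path a b).exists.choose_spec

lemma tpath_eq (hT : G.IsTree) {a b : V} (p : G.Walk a b) (hp : p.IsPath) :
    p = tpath hT a b :=
  ((hT.existsUnique_path a b).unique hp (tpath_isPath hT a b))

lemma aux_surj [Fintype V] (hT : G.IsTree) (r : V)
    (hdeg : ∀ v, (G.neighborSet v).ncard ≤ 2) (hdegr : (G.neighborSet r).ncard ≤ 1)
    (A : Finset V) (hrA : r ∈ A) (hconn : (G.induce (A : Set V)).Connected) :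
    ∃ u, (tpath hT r u).support.toFinset = A := by
  obtain ⟨u, huA, hmax⟩ := A.exists_max_image (fun x => G.dist r x) ⟨r, hrA⟩
  refine ⟨u, ?_⟩
  ext x
  rw [List.mem_toFinset]
  constructor
  · intro hx
    exact aux_convex hT hconn (by exact hrA) (by exact huA) _ (tpath_isPath hT r u) x hx
  · intro hx
    have hss : (G.neighborSet r \ (∅ : Set V)).Subsingleton := by
      rw [Set.diff_empty]
      exact aux_subsingleton_of_ncard_le_one (Set.toFinite _) hdegr
    have hbr := aux_branch hT hdeg (tpath hT r x) (tpath hT r u) ∅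
      (tpath_isPath hT r x) (tpath_isPath hT r u) hss (by simp) (by simp)
    rcases hbr with h | h
    · exact h
    · have h1 := aux_dist_add hT _ (tpath_isPath hT r x) h
      have h2 : G.dist r x ≤ G.dist r u := hmax x hx
      have h3 : G.dist u x = 0 := by omega
      have h4 : u = x := (hT.isConnected.preconnected u x).dist_eq_zero_iff.mp h3
      rw [← h4]
      exact SimpleGraph.Walk.end_mem_support _

private theorem subtreeCount_root_ge_card' {V : Type*} [Fintype V] (G : SimpleGraph V)
    (hT : G.IsTree) (r : V) (n : ℕ) (hn : n = Fintype.card V) :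
    n ≤ Nat.card {A : Finset V // r ∈ A ∧ (G.induce (A : Set V)).Connected} ∧
      (Nat.card {A : Finset V // r ∈ A ∧ (G.induce (A : Set V)).Connected} = n ↔
        ((∀ v, (G.neighborSet v).ncard ≤ 2) ∧ (G.neighborSet r).ncard ≤ 1)) := by
  classical
  have hre : ∀ x y : V, G.Reachable x y := fun x y => hT.isConnected.preconnected x y
  -- the injection from vertices to root-containing subtrees
  let Φ : V → {A : Finset V // r ∈ A ∧ (G.induce (A : Set V)).Connected} := fun u =>
    ⟨(tpath hT r u).support.toFinset,
      List.mem_toFinset.mpr ((tpath hT r u).start_mem_support),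
      by
        have : (((tpath hT r u).support.toFinset : Finset V) : Set V)
            = {v | v ∈ (tpath hT r u).support} := by
          ext z; simp
        rw [this]
        exact (tpath hT r u).connected_induce_support⟩
  have hΦval : ∀ u, (Φ u).1 = (tpath hT r u).support.toFinset := fun u => rfl
  have hinj : Function.Injective Φ := by
    intro u u' h
    have hval : (tpath hT r u).support.toFinset = (tpath hT r u').support.toFinset :=
      congrArg Subtype.val h
    have hu' : u' ∈ (tpath hT r u).support := by
      rw [← List.mem_toFinset, hval, List.mem_toFinset]
      exact SimpleGraph.Walk.end_mem_support _
    have hu : u ∈ (tpath hT r u').support := by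
      rw [← List.mem_toFinset, ← hval, List.mem_toFinset]
      exact SimpleGraph.Walk.end_mem_support _
    have h1 := aux_dist_add hT _ (tpath_isPath hT r u) hu'
    have h2 := aux_dist_add hT _ (tpath_isPath hT r u') hu
    have hcomm : G.dist u u' = G.dist u' u := SimpleGraph.dist_comm ..
    have h3 : G.dist u u' = 0 := by omega
    exact (hre u u').dist_eq_zero_iff.mp h3
  have hlower : n ≤ Nat.card {A : Finset V // r ∈ A ∧ (G.induce (A : Set V)).Connected} := by
    calc n = Nat.card V := by rw [hn, Nat.card_eq_fintype_card]
    _ ≤ _ := Nat.card_le_card_of_injective Φ hinj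
  refine ⟨hlower, ?_, ?_⟩
  · -- equality → degree conditions
    intro hcount
    have hbij : Function.Bijective Φ := by
      refine (Nat.bijective_iff_injective_and_card Φ).mpr ⟨hinj, ?_⟩
      rw [hcount, hn, Nat.card_eq_fintype_card]
    have hsurj := hbij.2
    have hdegr : (G.neighborSet r).ncard ≤ 1 := by
      by_contra hc
      push_neg at hc
      obtain ⟨a, b, ha, hb, hab⟩ := (Set.one_lt_ncard_iff (Set.toFinite _)).mp hc
      -- the set {r, a, b} is a connected subtree containing r
      have hra : G.Adj r a := ha
      have hrb : G.Adj r b := hb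
      have hconn0 := (SimpleGraph.Subgraph.connected_sup
        (SimpleGraph.Subgraph.subgraphOfAdj_connected hra).preconnected
        (SimpleGraph.Subgraph.subgraphOfAdj_connected hrb).preconnected ⟨r, by simp⟩)
      have hIC := hconn0.induce_verts
      have hverts : ((G.subgraphOfAdj hra ⊔ G.subgraphOfAdj hrb).verts : Set V)
          = (({r, a, b} : Finset V) : Set V) := by
        ext z; simp [Set.mem_insert_iff]; tauto
      rw [hverts] at hIC
      obtain ⟨u, hu⟩ := hsurj ⟨{r, a, b}, by simp, hIC⟩
      have hval : (tpath hT r u).support.toFinset = {r, a, b} := congrArg Subtype.val hu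
      have haS : a ∈ (tpath hT r u).support := by
        rw [← List.mem_toFinset, hval]; simp
      have hbS : b ∈ (tpath hT r u).support := by
        rw [← List.mem_toFinset, hval]; simp
      have hrS : r ∈ (tpath hT r u).support := SimpleGraph.Walk.start_mem_support _
      have hda := aux_adj_pos hT _ (tpath_isPath hT r u) hrS haS hra
      have hdb := aux_adj_pos hT _ (tpath_isPath hT r u) hrS hbS hrb
      rw [SimpleGraph.dist_self] at hda hdb
      have hdab : G.dist r a = G.dist r b := by omega
      exact hab (aux_eq_of_dist_eq hT _ (tpath_isPath hT r u) haS hbS hdab)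
    refine ⟨?_, hdegr⟩
    intro v
    by_contra hc
    push_neg at hc
    obtain ⟨a, b, c0, ha, hb, hc0, hab, hac, hbc⟩ :=
      (Set.two_lt_ncard_iff (Set.toFinite _)).mp hc
    have hvr : v ≠ r := by
      rintro rfl
      omega
    set p := tpath hT r v with hpdef
    have hp : p.IsPath := tpath_isPath hT r v
    have key : ∀ w1 w2 : V, G.Adj v w1 → G.Adj v w2 → w1 ∈ p.support → w2 ∈ p.support →
        w1 = w2 := by
      intro w1 w2 h1 h2 m1 m2
      have d1 := aux_dist_add hT p hp m1
      have d2 := aux_dist_add hT p hp m2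
      have e1 : G.dist w1 v = 1 := aux_dist_adj hT h1.symm
      have e2 : G.dist w2 v = 1 := aux_dist_adj hT h2.symm
      exact aux_eq_of_dist_eq hT p hp m1 m2 (by omega)
    obtain ⟨x1, x2, hvx1, hvx2, hx12, hx1, hx2⟩ : ∃ x1 x2 : V, G.Adj v x1 ∧ G.Adj v x2 ∧
        x1 ≠ x2 ∧ x1 ∉ p.support ∧ x2 ∉ p.support := by
      by_cases hA : a ∈ p.support
      · exact ⟨b, c0, hb, hc0, hbc, fun h => hab (key a b ha hb hA h),
          fun h => hac ((key a c0 ha hc0 hA h))⟩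
      · by_cases hB : b ∈ p.support
        · exact ⟨a, c0, ha, hc0, hac, hA, fun h => hbc (key b c0 hb hc0 hB h)⟩
        · exact ⟨a, b, ha, hb, hab, hA, hB⟩
    -- the penultimate vertex of p
    have hlen : 1 ≤ p.length := by
      have := aux_length_eq_dist hT p hp
      have := SimpleGraph.Connected.pos_dist_of_ne hT.isConnected (Ne.symm hvr)
      omega
    obtain ⟨c, hvc, hcp⟩ : ∃ c : V, G.Adj v c ∧ c ∈ p.support := by
      have hadj := p.adj_getVert_succ (i := p.length - 1) (by omega)
      have hi : p.length - 1 + 1 = p.length := by omega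
      rw [hi, p.getVert_length] at hadj
      refine ⟨p.getVert (p.length - 1), hadj.symm, ?_⟩
      rw [SimpleGraph.Walk.mem_support_iff_exists_getVert]
      exact ⟨p.length - 1, rfl, by omega⟩
    have hcx1 : c ≠ x1 := fun h => hx1 (h ▸ hcp)
    have hcx2 : c ≠ x2 := fun h => hx2 (h ▸ hcp)
    -- the connected set A
    set A : Finset V := insert x1 (insert x2 p.support.toFinset) with hAdef
    have hrA : r ∈ A := by
      simp [hAdef, List.mem_toFinset, SimpleGraph.Walk.start_mem_support]
    have hvsup : v ∈ p.support := SimpleGraph.Walk.end_mem_support _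
    have hconn1 := SimpleGraph.Subgraph.connected_sup (SimpleGraph.Subgraph.connected_sup
      p.toSubgraph_connected.preconnected
      (SimpleGraph.Subgraph.subgraphOfAdj_connected hvx1).preconnected
      ⟨v, p.end_mem_verts_toSubgraph, by simp⟩).preconnected
      (SimpleGraph.Subgraph.subgraphOfAdj_connected hvx2).preconnected
      ⟨v, Or.inl p.end_mem_verts_toSubgraph, by simp⟩
    have hIC := hconn1.induce_verts
    have hverts : ((p.toSubgraph ⊔ G.subgraphOfAdj hvx1 ⊔ G.subgraphOfAdj hvx2).verts : Set V)
        = ((A : Finset V) : Set V) := by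
      ext z
      simp only [SimpleGraph.Subgraph.verts_sup, Set.mem_union,
        SimpleGraph.Walk.mem_verts_toSubgraph, SimpleGraph.subgraphOfAdj_verts,
        Set.mem_insert_iff, Set.mem_singleton_iff, hAdef, Finset.coe_insert,
        Finset.mem_coe, List.coe_toFinset, Set.mem_setOf_eq]
      constructor
      · rintro ((h | (rfl | rfl)) | (rfl | rfl)) <;> tauto
      · rintro (rfl | (rfl | h)) <;> tauto
    rw [hverts] at hIC
    obtain ⟨u, hu⟩ := hsurj ⟨A, hrA, hIC⟩
    have hval : (tpath hT r u).support.toFinset = A := congrArg Subtype.val hu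
    set q := tpath hT r u with hqdef
    have hq : q.IsPath := tpath_isPath hT r u
    have hmemq : ∀ z, z ∈ A → z ∈ q.support := by
      intro z hz
      rw [← List.mem_toFinset, hval]
      exact hz
    have hx1q : x1 ∈ q.support := hmemq x1 (by simp [hAdef])
    have hx2q : x2 ∈ q.support := hmemq x2 (by simp [hAdef])
    have hvq : v ∈ q.support := hmemq v (by simp [hAdef, List.mem_toFinset, hvsup])
    have hcq : c ∈ q.support := hmemq c (by simp [hAdef, List.mem_toFinset, hcp])
    have p1 := aux_adj_pos hT q hq hvq hx1q hvx1
    have p2 := aux_adj_pos hT q hq hvq hx2q hvx2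
    have p3 := aux_adj_pos hT q hq hvq hcq hvc
    have hcase : G.dist r x1 = G.dist r x2 ∨ G.dist r x1 = G.dist r c ∨
        G.dist r x2 = G.dist r c := by omega
    rcases hcase with h | h | h
    · exact hx12 (aux_eq_of_dist_eq hT q hq hx1q hx2q h)
    · exact hcx1 (aux_eq_of_dist_eq hT q hq hcq hx1q h.symm)
    · exact hcx2 (aux_eq_of_dist_eq hT q hq hcq hx2q h.symm)
  · -- degree conditions → equality
    rintro ⟨hdeg, hdegr⟩
    have hsurj : Function.Surjective Φ := by
      rintro ⟨A, hrA, hconn⟩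
      obtain ⟨u, hu⟩ := aux_surj hT r hdeg hdegr A hrA hconn
      exact ⟨u, Subtype.ext hu⟩
    have := Nat.card_eq_of_bijective Φ ⟨hinj, hsurj⟩
    rw [← this, Nat.card_eq_fintype_card, hn]

end Aux

/-- Among rooted trees of order `n`, the number of root-containing
subtrees is at least `n`, with equality iff the tree is a path rooted at an end vertex. -/

theorem subtreeCount_root_ge_card {V : Type*} [Fintype V] (G : SimpleGraph V)
    (hT : G.IsTree) (r : V) (n : ℕ) (hn : n = Fintype.card V) :
    n ≤ subtreeCount G r ∧
      (subtreeCount G r = n ↔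
        ((∀ v, (G.neighborSet v).ncard ≤ 2) ∧ (G.neighborSet r).ncard ≤ 1)) := by
  have h := subtreeCount_root_ge_card' G hT r n hn
  rw [subtreeCount]
  exact h
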